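/- Solution of Pell's equation: let a > 1 be a natural number and d = a² − 1. If b ∈ ℤ√d satisfies 1 ≤ b and N(b) = 1, then there exists n ∈ ℕ such that b = (a + √d)^n. -/

import Mathlib

theorem pellZd_eq_pow {a : ℕ} (a1 : 1 < a) (n : ℕ) :
    Pell.pellZd a1 n = (⟨(a : ℤ), 1⟩ : ℤ√((a * a - 1 : ℕ) : ℤ)) ^ n := by
  induction n with
  | zero => rw [pow_zero]; rfl
  | succ k ih => rw [Pell.pellZd_succ, ih, pow_succ]; rfl

theorem pell_solution {a : ℕ} (a1 : 1 < a) (b : ℤ√((a ^ 2 - 1 : ℕ) : ℤ))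
    (hb : 1 ≤ b) (hnorm : b.norm = 1) :
    ∃ n : ℕ, b = (⟨(a : ℤ), 1⟩ : ℤ√((a ^ 2 - 1 : ℕ) : ℤ)) ^ n := by
  suffices h : ∀ (d : ℕ), a * a - 1 = d → ∀ c : ℤ√(d : ℤ), 1 ≤ c → c.norm = 1 →
      ∃ n : ℕ, c = (⟨(a : ℤ), 1⟩ : ℤ√(d : ℤ)) ^ n by
    exact h _ (by rw [sq]) b hb hnorm
  rintro d rfl c hc hnorm
  have hp : Pell.IsPell c := Pell.isPell_norm.mpr (by
    rw [← Zsqrtd.norm_eq_mul_conj, hnorm, Int.cast_one])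
  obtain ⟨n, rfl⟩ := Pell.eq_pellZd a1 c hc hp
  exact ⟨n, pellZd_eq_pow a1 n⟩
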